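/- If s ≥ 2, then the number of arithmetical structures on the star graph CT(1,s) (the star with s+1 vertices) is |Arith(CT(1,s))| = 1 + Σ_{j=0}^{s−2} binom(s, j)·|SArith(CT(1, s−j))|. -/

import Mathlib

/-- The conditions defining an arithmetical structure on the coconut tree `CT(p,s)`:
the path vertices are `v_1, …, v_p` with labels `d i`, `r i` for `1 ≤ i ≤ p`, the
leaves are `ℓ_1, …, ℓ_s` with labels `dl j`, `rl j` for `1 ≤ j ≤ s`; `v_i` is adjacent
to `v_{i+1}` for `1 ≤ i ≤ p - 1` and every leaf is adjacent to `v_p`.  All labels are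
positive, at every vertex `d_v * r_v` equals the sum of the `r`-values of its
neighbors, and the gcd of all the `r`-values is `1`. -/
def IsCTArith (p s : ℕ) (d r dl rl : ℕ → ℕ) : Prop :=
  (∀ i, 1 ≤ i → i ≤ p → 0 < d i) ∧
  (∀ i, 1 ≤ i → i ≤ p → 0 < r i) ∧
  (∀ j, 1 ≤ j → j ≤ s → 0 < dl j) ∧
  (∀ j, 1 ≤ j → j ≤ s → 0 < rl j) ∧
  (∀ i, 1 ≤ i → i ≤ p → d i * r i =
      (if 2 ≤ i then r (i - 1) else 0) +
      (if i < p then r (i + 1) else 0) +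
      (if i = p then ∑ j ∈ Finset.Icc 1 s, rl j else 0)) ∧
  (∀ j, 1 ≤ j → j ≤ s → dl j * rl j = r p) ∧
  Nat.gcd ((Finset.Icc 1 p).gcd r) ((Finset.Icc 1 s).gcd rl) = 1

/-- An arithmetical structure on `CT(p,s)` is smooth if `d_i ≥ 2` for all
`1 ≤ i ≤ p - 1` and `d_{ℓ_j} ≥ 2` for all `1 ≤ j ≤ s`. -/
def IsCTSmooth (p s : ℕ) (d dl : ℕ → ℕ) : Prop :=
  (∀ i, 1 ≤ i → i ≤ p - 1 → 2 ≤ d i) ∧ (∀ j, 1 ≤ j → j ≤ s → 2 ≤ dl j)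

/-- An arithmetical-structure candidate on `CT(p,s)`, given by its labels, normalized
so that all labels vanish outside the index ranges `1 ≤ i ≤ p` (path) and
`1 ≤ j ≤ s` (leaves). -/
structure CTStruct (p s : ℕ) : Type where
  d : ℕ → ℕ
  r : ℕ → ℕ
  dl : ℕ → ℕ
  rl : ℕ → ℕ
  d_norm : ∀ i, ¬(1 ≤ i ∧ i ≤ p) → d i = 0
  r_norm : ∀ i, ¬(1 ≤ i ∧ i ≤ p) → r i = 0
  dl_norm : ∀ j, ¬(1 ≤ j ∧ j ≤ s) → dl j = 0
  rl_norm : ∀ j, ¬(1 ≤ j ∧ j ≤ s) → rl j = 0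

/-- `A` is an arithmetical structure on `CT(p,s)`. -/
def CTStruct.IsArith {p s : ℕ} (A : CTStruct p s) : Prop :=
  IsCTArith p s A.d A.r A.dl A.rl

/-- `A` is a smooth arithmetical structure labeling on `CT(p,s)`. -/
def CTStruct.IsSmooth {p s : ℕ} (A : CTStruct p s) : Prop :=
  IsCTSmooth p s A.d A.dl

/-- The number of smooth arithmetical structures on `CT(p,s)`. -/
noncomputable def sArithCard (p s : ℕ) : ℕ :=
  Nat.card {A : CTStruct p s // A.IsArith ∧ A.IsSmooth}



lemma egy_finite : ∀ (k : ℕ) (q : ℚ),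
    {f : Fin k → ℕ | (∀ i, 0 < f i) ∧ ∑ i, ((f i : ℚ))⁻¹ = q}.Finite := by
  intro k
  induction k with
  | zero =>
    intro q
    haveI : Subsingleton (Fin 0 → ℕ) := ⟨fun f g => funext fun i => i.elim0⟩
    haveI : Finite (Fin 0 → ℕ) := Finite.of_subsingleton
    exact Set.toFinite _
  | succ k ih =>
    intro q
    by_cases hq : 0 < q
    · set N : ℕ := (⌈((k:ℚ) + 1)/q⌉).toNat with hN
      have h0 : (0:ℚ) < ((k:ℚ) + 1)/q := by positivity
      have hNge : ((k:ℚ) + 1)/q ≤ N := by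
        have hc : 0 ≤ ⌈((k:ℚ) + 1)/q⌉ := Int.ceil_nonneg h0.le
        have h2 : ((⌈((k:ℚ) + 1)/q⌉ : ℚ)) = (N : ℚ) := by
          rw [hN]; exact_mod_cast (congrArg (fun z : ℤ => (z : ℚ)) (Int.toNat_of_nonneg hc)).symm
        rw [← h2]; exact Int.le_ceil _
      have hsub : {f : Fin (k+1) → ℕ | (∀ i, 0 < f i) ∧ ∑ i, ((f i : ℚ))⁻¹ = q} ⊆
          ⋃ (i : Fin (k+1)), ⋃ (n ∈ Finset.Icc 1 N),
            (fun g : Fin k → ℕ => Fin.insertNth i n g) ''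
              {g | (∀ m, 0 < g m) ∧ ∑ m, ((g m : ℚ))⁻¹ = q - ((n:ℚ))⁻¹} := by
        rintro f ⟨hpos, hsum⟩
        have hex : ∃ i, f i ≤ N := by
          by_contra hcon
          push_neg at hcon
          have key : ∀ i : Fin (k+1), ((f i : ℚ))⁻¹ < q / ((k:ℚ)+1) := by
            intro i
            have hfi : (0:ℚ) < (f i : ℚ) := by exact_mod_cast hpos i
            have h4 : ((k:ℚ)+1)/q < (f i:ℚ) := by
              refine lt_of_le_of_lt hNge ?_
              exact_mod_cast hcon i
            rw [div_lt_iff₀ hq] at h4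
            rw [inv_eq_one_div, div_lt_div_iff₀ hfi (by positivity : (0:ℚ) < (k:ℚ)+1)]
            linarith
          have hlt : ∑ i, ((f i : ℚ))⁻¹ < ∑ _i : Fin (k+1), q / ((k:ℚ)+1) :=
            Finset.sum_lt_sum_of_nonempty ⟨0, Finset.mem_univ 0⟩ (fun i _ => key i)
          rw [Finset.sum_const, Finset.card_univ, Fintype.card_fin, nsmul_eq_mul] at hlt
          have : ((k:ℚ)+1) * (q / ((k:ℚ)+1)) = q := by
            field_simp
          rw [hsum] at hlt
          push_cast at hlt
          rw [this] at hlt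
          exact lt_irrefl _ hlt
        obtain ⟨i, hi⟩ := hex
        refine Set.mem_iUnion.2 ⟨i, ?_⟩
        refine Set.mem_iUnion₂.2 ⟨f i, Finset.mem_Icc.2 ⟨hpos i, hi⟩, ?_⟩
        refine ⟨Fin.removeNth i f, ⟨fun m => hpos _, ?_⟩, ?_⟩
        · have := Fin.sum_univ_succAbove (fun j => ((f j : ℚ))⁻¹) i
          rw [hsum.symm, this]
          simp [Fin.removeNth]
        · show i.insertNth (f i) (i.removeNth f) = f
          rw [Fin.insertNth_removeNth, Function.update_eq_self]
      refine Set.Finite.subset ?_ hsub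
      apply Set.finite_iUnion
      intro i
      apply Set.Finite.biUnion (Finset.finite_toSet _)
      intro n _
      exact (ih _).image _
    · refine Set.Finite.subset Set.finite_empty ?_
      rintro f ⟨hpos, hsum⟩
      exfalso
      have : 0 < ∑ i, ((f i:ℚ))⁻¹ :=
        Finset.sum_pos (fun i _ => by
          have : (0:ℚ) < f i := by exact_mod_cast hpos i
          positivity) ⟨0, Finset.mem_univ 0⟩
      rw [hsum] at this
      exact hq this




-- ext lemma
lemma CTStruct.ext' {p s : ℕ} {A B : CTStruct p s} (h1 : A.d = B.d) (h2 : A.r = B.r)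
    (h3 : A.dl = B.dl) (h4 : A.rl = B.rl) : A = B := by
  cases A; cases B; simp_all

/-- Characterization of arithmetical structures on the star `CT(1,s)`. -/
lemma isArith_star_iff {s : ℕ} (A : CTStruct 1 s) :
    A.IsArith ↔ (0 < A.d 1 ∧ 0 < A.r 1 ∧
      (∀ j, 1 ≤ j → j ≤ s → 0 < A.dl j) ∧ (∀ j, 1 ≤ j → j ≤ s → 0 < A.rl j) ∧
      A.d 1 * A.r 1 = ∑ j ∈ Finset.Icc 1 s, A.rl j ∧
      (∀ j, 1 ≤ j → j ≤ s → A.dl j * A.rl j = A.r 1) ∧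
      Nat.gcd (A.r 1) ((Finset.Icc 1 s).gcd A.rl) = 1) := by
  unfold CTStruct.IsArith IsCTArith
  constructor
  · rintro ⟨h1, h2, h3, h4, h5, h6, h7⟩
    refine ⟨h1 1 le_rfl le_rfl, h2 1 le_rfl le_rfl, h3, h4, ?_, h6, ?_⟩
    · have := h5 1 le_rfl le_rfl
      norm_num at this
      exact this
    · rw [Finset.Icc_self, Finset.gcd_singleton] at h7
      simpa using h7
  · rintro ⟨h1, h2, h3, h4, h5, h6, h7⟩
    refine ⟨?_, ?_, h3, h4, ?_, h6, ?_⟩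
    · intro i hi1 hi2; have : i = 1 := le_antisymm hi2 hi1; rwa [this]
    · intro i hi1 hi2; have : i = 1 := le_antisymm hi2 hi1; rwa [this]
    · intro i hi1 hi2; have hi : i = 1 := le_antisymm hi2 hi1; subst hi
      norm_num
      exact h5
    · rw [Finset.Icc_self, Finset.gcd_singleton]
      simpa using h7

/-- In an arithmetical structure on a star, `r 1` is the lcm of the leaf `d`-labels. -/
lemma star_r_eq_lcm {s : ℕ} (A : CTStruct 1 s) (h : A.IsArith) :
    A.r 1 = (Finset.Icc 1 s).lcm A.dl := by
  rw [isArith_star_iff] at h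
  obtain ⟨hd1, hr1, hdl, hrl, hsum, heq, hgcd⟩ := h
  set L := (Finset.Icc 1 s).lcm A.dl with hL
  have hLdvd : L ∣ A.r 1 := by
    apply Finset.lcm_dvd
    intro j hj
    rw [Finset.mem_Icc] at hj
    exact ⟨A.rl j, (heq j hj.1 hj.2).symm⟩
  obtain ⟨t, ht⟩ := hLdvd
  have htdvd : ∀ j, 1 ≤ j → j ≤ s → t ∣ A.rl j := by
    intro j hj1 hj2
    have hdvdL : A.dl j ∣ L := Finset.dvd_lcm (Finset.mem_Icc.2 ⟨hj1, hj2⟩)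
    obtain ⟨u, hu⟩ := hdvdL
    have : A.dl j * A.rl j = A.dl j * (u * t) := by
      rw [heq j hj1 hj2, ht, hu]; ring
    have := Nat.eq_of_mul_eq_mul_left (hdl j hj1 hj2) this
    exact ⟨u, by rw [this]; ring⟩
  have htr : t ∣ A.r 1 := ⟨L, by rw [ht]; ring⟩
  have ht1 : t ∣ 1 := by
    rw [← hgcd]
    exact Nat.dvd_gcd htr (Finset.dvd_gcd fun j hj => by
      rw [Finset.mem_Icc] at hj; exact htdvd j hj.1 hj.2)
  have ht1' : t = 1 := Nat.eq_one_of_dvd_one ht1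
  rw [ht, ht1', mul_one]

lemma star_dl_pos_mem {s : ℕ} (A : CTStruct 1 s) (h : A.IsArith) :
    ∀ j ∈ Finset.Icc 1 s, 0 < A.dl j := by
  rw [isArith_star_iff] at h
  intro j hj
  rw [Finset.mem_Icc] at hj
  exact h.2.2.1 j hj.1 hj.2

lemma star_d1_le {s : ℕ} (A : CTStruct 1 s) (h : A.IsArith) : A.d 1 ≤ s := by
  rw [isArith_star_iff] at h
  obtain ⟨hd1, hr1, hdl, hrl, hsum, heq, hgcd⟩ := h
  have hle : ∑ j ∈ Finset.Icc 1 s, A.rl j ≤ ∑ _j ∈ Finset.Icc 1 s, A.r 1 := by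
    apply Finset.sum_le_sum
    intro j hj
    rw [Finset.mem_Icc] at hj
    calc A.rl j ≤ A.dl j * A.rl j := Nat.le_mul_of_pos_left _ (hdl j hj.1 hj.2)
    _ = A.r 1 := heq j hj.1 hj.2
  rw [Finset.sum_const, Nat.card_Icc, smul_eq_mul] at hle
  have : A.d 1 * A.r 1 ≤ (s + 1 - 1) * A.r 1 := by rw [← hsum] at hle; exact hle
  have := Nat.le_of_mul_le_mul_right this hr1
  omega

lemma star_sum_inv {s : ℕ} (A : CTStruct 1 s) (h : A.IsArith) :
    ∑ i : Fin s, ((A.dl (i + 1) : ℚ))⁻¹ = (A.d 1 : ℚ) := by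
  rw [isArith_star_iff] at h
  obtain ⟨hd1, hr1, hdl, hrl, hsum, heq, hgcd⟩ := h
  have key : ∀ j, 1 ≤ j → j ≤ s → ((A.dl j : ℚ))⁻¹ = (A.rl j : ℚ) / (A.r 1 : ℚ) := by
    intro j hj1 hj2
    have hdl0 : (A.dl j : ℚ) ≠ 0 := by exact_mod_cast (hdl j hj1 hj2).ne'
    have hr0 : (A.r 1 : ℚ) ≠ 0 := by exact_mod_cast hr1.ne'
    rw [inv_eq_one_div, div_eq_div_iff hdl0 hr0, one_mul, mul_comm]
    exact_mod_cast (heq j hj1 hj2).symm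
  have h2 : ∑ i : Fin s, ((A.dl (i + 1) : ℚ))⁻¹
      = ∑ i : Fin s, (A.rl ((i : ℕ) + 1) : ℚ) / (A.r 1 : ℚ) := by
    apply Finset.sum_congr rfl
    intro i _
    exact key ((i : ℕ) + 1) (by omega) (by omega)
  rw [h2, ← Finset.sum_div]
  have h3 : ∑ i : Fin s, (A.rl ((i : ℕ) + 1) : ℚ) = ((∑ j ∈ Finset.Icc 1 s, A.rl j : ℕ) : ℚ) := by
    push_cast
    rw [Fin.sum_univ_eq_sum_range (fun n => (A.rl (n + 1) : ℚ)) s]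
    rw [← Finset.Ico_add_one_right_eq_Icc, Finset.sum_Ico_eq_sum_range]
    simp [add_comm]
  rw [h3, ← hsum]
  have hr0 : (A.r 1 : ℚ) ≠ 0 := by exact_mod_cast hr1.ne'
  push_cast
  field_simp

lemma star_arith_finite (s : ℕ) : Finite {A : CTStruct 1 s // A.IsArith} := by
  classical
  set D : Set (Fin s → ℕ) :=
    ⋃ d1 ∈ Finset.Icc 1 s,
      {f : Fin s → ℕ | (∀ i, 0 < f i) ∧ ∑ i, ((f i : ℚ))⁻¹ = (d1 : ℚ)} with hD
  have hDfin : D.Finite :=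
    Set.Finite.biUnion (Finset.finite_toSet _) (fun d1 _ => egy_finite s _)
  have hmem : ∀ (A : {A : CTStruct 1 s // A.IsArith}),
      (fun i : Fin s => A.1.dl ((i : ℕ) + 1)) ∈ D := by
    intro A
    rw [hD]
    refine Set.mem_biUnion (Finset.mem_coe.2 (Finset.mem_Icc.2
      ⟨((isArith_star_iff A.1).1 A.2).1, star_d1_le A.1 A.2⟩)) ?_
    refine ⟨fun i => star_dl_pos_mem A.1 A.2 _ (Finset.mem_Icc.2 ⟨by omega, by omega⟩), ?_⟩
    exact star_sum_inv A.1 A.2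
  haveI := hDfin.to_subtype
  apply Finite.of_injective (fun A => (⟨fun i : Fin s => A.1.dl ((i : ℕ) + 1), hmem A⟩ : D))
  intro A B hAB
  have hvals : ∀ i : Fin s, A.1.dl ((i : ℕ) + 1) = B.1.dl ((i : ℕ) + 1) :=
    fun i => congrFun (congrArg Subtype.val hAB) i
  have hA := (isArith_star_iff A.1).1 A.2
  have hB := (isArith_star_iff B.1).1 B.2
  have hdl : A.1.dl = B.1.dl := by
    funext j
    by_cases hj : 1 ≤ j ∧ j ≤ s
    · have := hvals ⟨j - 1, by omega⟩
      simpa [Nat.sub_add_cancel hj.1] using this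
    · rw [A.1.dl_norm j hj, B.1.dl_norm j hj]
  have hr : A.1.r = B.1.r := by
    funext i
    by_cases hi : 1 ≤ i ∧ i ≤ 1
    · have : i = 1 := by omega
      rw [this, star_r_eq_lcm A.1 A.2, star_r_eq_lcm B.1 B.2, hdl]
    · rw [A.1.r_norm i hi, B.1.r_norm i hi]
  have hr1 : A.1.r 1 = B.1.r 1 := congrFun hr 1
  have hrl : A.1.rl = B.1.rl := by
    funext j
    by_cases hj : 1 ≤ j ∧ j ≤ s
    · apply Nat.eq_of_mul_eq_mul_left (hA.2.2.1 j hj.1 hj.2)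
      rw [hA.2.2.2.2.2.1 j hj.1 hj.2, hr1, congrFun hdl j, hB.2.2.2.2.2.1 j hj.1 hj.2]
    · rw [A.1.rl_norm j hj, B.1.rl_norm j hj]
  have hd : A.1.d = B.1.d := by
    funext i
    by_cases hi : 1 ≤ i ∧ i ≤ 1
    · have h1 : i = 1 := by omega
      subst h1
      apply Nat.eq_of_mul_eq_mul_right hA.2.1
      rw [hA.2.2.2.2.1, hrl, hr1, hB.2.2.2.2.1]
    · rw [A.1.d_norm i hi, B.1.d_norm i hi]
  exact Subtype.ext (CTStruct.ext' hd hr hdl hrl)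

/-! ### Constructor for star structures -/

def mkStar (s d1 r1 : ℕ) (dl rl : ℕ → ℕ) : CTStruct 1 s where
  d i := if i = 1 then d1 else 0
  r i := if i = 1 then r1 else 0
  dl j := if 1 ≤ j ∧ j ≤ s then dl j else 0
  rl j := if 1 ≤ j ∧ j ≤ s then rl j else 0
  d_norm i hi := if_neg (by omega)
  r_norm i hi := if_neg (by omega)
  dl_norm j hj := if_neg hj
  rl_norm j hj := if_neg hj

@[simp] lemma mkStar_d (s d1 r1 : ℕ) (dl rl : ℕ → ℕ) (i : ℕ) :
    (mkStar s d1 r1 dl rl).d i = if i = 1 then d1 else 0 := rfl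
@[simp] lemma mkStar_r (s d1 r1 : ℕ) (dl rl : ℕ → ℕ) (i : ℕ) :
    (mkStar s d1 r1 dl rl).r i = if i = 1 then r1 else 0 := rfl
@[simp] lemma mkStar_dl (s d1 r1 : ℕ) (dl rl : ℕ → ℕ) (j : ℕ) :
    (mkStar s d1 r1 dl rl).dl j = if 1 ≤ j ∧ j ≤ s then dl j else 0 := rfl
@[simp] lemma mkStar_rl (s d1 r1 : ℕ) (dl rl : ℕ → ℕ) (j : ℕ) :
    (mkStar s d1 r1 dl rl).rl j = if 1 ≤ j ∧ j ≤ s then rl j else 0 := rfl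

/-- gcd of the leaf `r`-labels is 1. -/
lemma star_gcd_rl {s : ℕ} (A : CTStruct 1 s) (h : A.IsArith) (hs : 1 ≤ s) :
    (Finset.Icc 1 s).gcd A.rl = 1 := by
  rw [isArith_star_iff] at h
  obtain ⟨hd1, hr1, hdl, hrl, hsum, heq, hgcd⟩ := h
  have h1 : (Finset.Icc 1 s).gcd A.rl ∣ A.r 1 := by
    have hm : (1 : ℕ) ∈ Finset.Icc 1 s := Finset.mem_Icc.2 ⟨le_rfl, hs⟩
    exact (Finset.gcd_dvd hm).trans ⟨A.dl 1, by rw [← heq 1 le_rfl hs]; ring⟩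
  have h2 := Nat.dvd_gcd h1 (dvd_refl ((Finset.Icc 1 s).gcd A.rl))
  rw [hgcd] at h2
  exact Nat.eq_one_of_dvd_one h2

/-! ### The full fiber: all leaf `d`-labels equal to 1 -/

def starOne (s : ℕ) : CTStruct 1 s := mkStar s s 1 (fun _ => 1) (fun _ => 1)

lemma starOne_spec {s : ℕ} (hs : 1 ≤ s) (A : CTStruct 1 s) :
    (A.IsArith ∧ (Finset.Icc 1 s).filter (fun j => A.dl j = 1) = Finset.Icc 1 s)
      ↔ A = starOne s := by
  constructor
  · rintro ⟨hA, hfil⟩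
    have hdl1 : ∀ x ∈ Finset.Icc 1 s, A.dl x = 1 := by
      intro x hx
      have hx' : x ∈ (Finset.Icc 1 s).filter (fun j => A.dl j = 1) := by rw [hfil]; exact hx
      exact (Finset.mem_filter.1 hx').2
    rw [isArith_star_iff] at hA
    obtain ⟨hd1, hr1, hdl, hrl, hsum, heq, hgcd⟩ := hA
    have hrleq : ∀ x ∈ Finset.Icc 1 s, A.rl x = A.r 1 := by
      intro x hx
      rw [Finset.mem_Icc] at hx
      have := heq x hx.1 hx.2
      rw [hdl1 x (Finset.mem_Icc.2 hx), one_mul] at this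
      exact this
    have hr1dvd : A.r 1 ∣ (Finset.Icc 1 s).gcd A.rl :=
      Finset.dvd_gcd fun x hx => (hrleq x hx) ▸ dvd_rfl
    have hgcd1 : (Finset.Icc 1 s).gcd A.rl = 1 :=
      star_gcd_rl A ((isArith_star_iff A).2 ⟨hd1, hr1, hdl, hrl, hsum, heq, hgcd⟩) hs
    have hr11 : A.r 1 = 1 := by
      rw [hgcd1] at hr1dvd
      exact Nat.eq_one_of_dvd_one hr1dvd
    have hds : A.d 1 = s := by
      have : A.d 1 * A.r 1 = ∑ j ∈ Finset.Icc 1 s, A.r 1 :=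
        hsum.trans (Finset.sum_congr rfl hrleq)
      rw [hr11, Finset.sum_const, Nat.card_Icc, smul_eq_mul, mul_one, mul_one] at this
      omega
    apply CTStruct.ext' <;> funext x <;> simp only [starOne, mkStar_d, mkStar_r, mkStar_dl, mkStar_rl]
    · by_cases hx : x = 1
      · subst hx; rw [if_pos rfl, hds]
      · rw [if_neg hx, A.d_norm x (by omega)]
    · by_cases hx : x = 1
      · subst hx; rw [if_pos rfl, hr11]
      · rw [if_neg hx, A.r_norm x (by omega)]
    · by_cases hx : 1 ≤ x ∧ x ≤ s
      · rw [if_pos hx, hdl1 x (Finset.mem_Icc.2 hx)]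
      · rw [if_neg hx, A.dl_norm x hx]
    · by_cases hx : 1 ≤ x ∧ x ≤ s
      · rw [if_pos hx, hrleq x (Finset.mem_Icc.2 hx), hr11]
      · rw [if_neg hx, A.rl_norm x hx]
  · rintro rfl
    constructor
    · rw [isArith_star_iff]
      refine ⟨by simp [starOne]; omega, by simp [starOne], ?_, ?_, ?_, ?_, ?_⟩
      · intro j h1 h2; simp [starOne, h1, h2]
      · intro j h1 h2; simp [starOne, h1, h2]
      · simp only [starOne, mkStar_d, mkStar_r, mkStar_rl]
        norm_num
        rw [Finset.filter_true_of_mem (fun x hx => Finset.mem_Icc.1 hx), Nat.card_Icc]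
        omega
      · intro j h1 h2; simp [starOne, h1, h2]
      · simp [starOne]
    · apply Finset.filter_true_of_mem
      intro x hx
      rw [Finset.mem_Icc] at hx
      simp [starOne, hx.1, hx.2]

/-! ### Fibers with exactly one big leaf are empty -/

lemma fiber_empty {s : ℕ} (t : Finset ℕ) (ht : t ⊆ Finset.Icc 1 s) (hcard : t.card + 1 = s)
    (A : CTStruct 1 s) (hA : A.IsArith) :
    (Finset.Icc 1 s).filter (fun j => A.dl j = 1) ≠ t := by
  intro hfil
  have hdl1 : ∀ x ∈ t, A.dl x = 1 := by
    intro x hx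
    have hx' : x ∈ (Finset.Icc 1 s).filter (fun j => A.dl j = 1) := by rw [hfil]; exact hx
    exact (Finset.mem_filter.1 hx').2
  rw [isArith_star_iff] at hA
  obtain ⟨hd1, hr1, hdl, hrl, hsum, heq, hgcd⟩ := hA
  obtain ⟨x, hx⟩ : ∃ x, Finset.Icc 1 s \ t = {x} := Finset.card_eq_one.1 (by
    rw [Finset.card_sdiff_of_subset ht, Nat.card_Icc]; omega)
  have hxmem : x ∈ Finset.Icc 1 s \ t := hx ▸ Finset.mem_singleton_self x
  rw [Finset.mem_sdiff] at hxmem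
  obtain ⟨hxIcc, hxt⟩ := hxmem
  have hxr : 1 ≤ x ∧ x ≤ s := Finset.mem_Icc.1 hxIcc
  have hdlx : 2 ≤ A.dl x := by
    have h1 : A.dl x ≠ 1 := by
      intro h
      apply hxt
      rw [← hfil]
      exact Finset.mem_filter.2 ⟨hxIcc, h⟩
    have h2 := hdl x hxr.1 hxr.2
    omega
  have hsplit : ∑ y ∈ Finset.Icc 1 s \ t, A.rl y + ∑ y ∈ t, A.rl y
      = ∑ y ∈ Finset.Icc 1 s, A.rl y := Finset.sum_sdiff ht
  have hts : ∑ y ∈ t, A.rl y = t.card * A.r 1 := by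
    have h1 : ∀ y ∈ t, A.rl y = A.r 1 := by
      intro y hy
      have hyIcc := Finset.mem_Icc.1 (ht hy)
      have h2 := heq y hyIcc.1 hyIcc.2
      rw [hdl1 y hy, one_mul] at h2
      exact h2
    calc ∑ y ∈ t, A.rl y = ∑ _y ∈ t, A.r 1 := Finset.sum_congr rfl h1
    _ = t.card * A.r 1 := by rw [Finset.sum_const, smul_eq_mul]
  rw [hx, Finset.sum_singleton, hts] at hsplit
  rw [← hsplit] at hsum
  -- hsum : A.d 1 * A.r 1 = A.rl x + t.card * A.r 1
  have h2rl : 2 * A.rl x ≤ A.r 1 := by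
    calc 2 * A.rl x ≤ A.dl x * A.rl x := Nat.mul_le_mul_right _ hdlx
    _ = A.r 1 := heq x hxr.1 hxr.2
  have hrlx := hrl x hxr.1 hxr.2
  have hlt : t.card * A.r 1 < A.d 1 * A.r 1 := by omega
  have hd1t : t.card < A.d 1 := Nat.lt_of_mul_lt_mul_right hlt
  have : (t.card + 1) * A.r 1 ≤ A.d 1 * A.r 1 := Nat.mul_le_mul_right _ hd1t
  rw [add_mul, one_mul] at this
  omega

section Fiber

@[simp] lemma mkStar_d_one (s d1 r1 : ℕ) (dl rl : ℕ → ℕ) :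
    (mkStar s d1 r1 dl rl).d 1 = d1 := by simp [mkStar_d]
@[simp] lemma mkStar_r_one (s d1 r1 : ℕ) (dl rl : ℕ → ℕ) :
    (mkStar s d1 r1 dl rl).r 1 = r1 := by simp [mkStar_r]
lemma mkStar_dl_fun (s d1 r1 : ℕ) (dl rl : ℕ → ℕ) :
    (mkStar s d1 r1 dl rl).dl = fun j => if 1 ≤ j ∧ j ≤ s then dl j else 0 := rfl
lemma mkStar_rl_fun (s d1 r1 : ℕ) (dl rl : ℕ → ℕ) :
    (mkStar s d1 r1 dl rl).rl = fun j => if 1 ≤ j ∧ j ≤ s then rl j else 0 := rfl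



variable {s : ℕ} (t : Finset ℕ)

lemma fiber_card {s : ℕ} (t : Finset ℕ) (ht : t ⊆ Finset.Icc 1 s) (hcard : t.card + 2 ≤ s) :
    Nat.card {A : CTStruct 1 s // A.IsArith ∧ (Finset.Icc 1 s).filter (fun j => A.dl j = 1) = t}
      = sArithCard 1 (s - t.card) := by
  classical
  set k := s - t.card with hk
  set c := Finset.Icc 1 s \ t with hcdef
  have hc : c.card = k := by rw [hcdef, Finset.card_sdiff_of_subset ht, Nat.card_Icc]; omega
  have hk2 : 2 ≤ k := by omega
  set e := c.orderIsoOfFin hc with he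
  set idx : ℕ → ℕ := fun m => if h : m - 1 < k then (e ⟨m-1, h⟩).1 else 0 with hidxdef
  set eidx : ℕ → ℕ := fun x => if h : x ∈ c then ((e.symm ⟨x, h⟩ : Fin k) : ℕ) + 1 else 0
    with heidxdef
  have hidx_mem : ∀ m, 1 ≤ m → m ≤ k → idx m ∈ c := by
    intro m h1 h2
    rw [hidxdef]
    simp only
    rw [dif_pos (by omega : m - 1 < k)]
    exact (e ⟨m-1, by omega⟩).2
  have heidx_mem : ∀ x, x ∈ c → 1 ≤ eidx x ∧ eidx x ≤ k := by
    intro x hx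
    rw [heidxdef]; simp only
    rw [dif_pos hx]
    exact ⟨by omega, by have := (e.symm ⟨x, hx⟩).2; omega⟩
  have hleft : ∀ m, 1 ≤ m → m ≤ k → eidx (idx m) = m := by
    intro m h1 h2
    have hm : m - 1 < k := by omega
    have h3 : idx m = (e ⟨m-1, hm⟩).1 := by simp only [hidxdef]; rw [dif_pos hm]
    have h4 : idx m ∈ c := by rw [h3]; exact (e ⟨m-1, hm⟩).2
    rw [heidxdef]; simp only
    rw [dif_pos h4]
    have h5 : (⟨idx m, h4⟩ : {x // x ∈ c}) = e ⟨m-1, hm⟩ := Subtype.ext h3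
    rw [h5, OrderIso.symm_apply_apply]
    show m - 1 + 1 = m
    omega
  have hright : ∀ x, x ∈ c → idx (eidx x) = x := by
    intro x hx
    have h3 : eidx x = ((e.symm ⟨x, hx⟩ : Fin k) : ℕ) + 1 := by simp only [heidxdef]; rw [dif_pos hx]
    rw [h3, hidxdef]; simp only
    have hm : ((e.symm ⟨x, hx⟩ : Fin k) : ℕ) + 1 - 1 < k := (e.symm ⟨x, hx⟩).2
    rw [dif_pos hm]
    have h5 : (⟨((e.symm ⟨x, hx⟩ : Fin k) : ℕ) + 1 - 1, hm⟩ : Fin k) = e.symm ⟨x, hx⟩ := by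
      apply Fin.ext; simp
    rw [h5, OrderIso.apply_symm_apply]
  have hcIcc : ∀ x ∈ c, x ∈ Finset.Icc 1 s ∧ x ∉ t := by
    intro x hx; exact Finset.mem_sdiff.1 hx
  have hsum_c : ∀ f : ℕ → ℕ, ∑ m ∈ Finset.Icc 1 k, f (idx m) = ∑ x ∈ c, f x := by
    intro f
    refine Finset.sum_nbij' (fun m => idx m) (fun x => eidx x) ?_ ?_ ?_ ?_ ?_
    · intro m hm; rw [Finset.mem_Icc] at hm; exact hidx_mem m hm.1 hm.2
    · intro x hx; exact Finset.mem_Icc.2 (heidx_mem x hx)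
    · intro m hm; rw [Finset.mem_Icc] at hm; exact hleft m hm.1 hm.2
    · intro x hx; exact hright x hx
    · intro m hm; rfl
  -- facts about a structure in the fiber
  have hAfacts : ∀ (A : CTStruct 1 s), A.IsArith →
      (Finset.Icc 1 s).filter (fun j => A.dl j = 1) = t →
      (∀ x ∈ t, A.dl x = 1 ∧ A.rl x = A.r 1) ∧ (∀ x ∈ c, 2 ≤ A.dl x) ∧
      t.card < A.d 1 ∧ (A.d 1 - t.card) * A.r 1 = ∑ x ∈ c, A.rl x := by
    intro A hA hfil
    have hA' := (isArith_star_iff A).1 hA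
    obtain ⟨hd1, hr1, hdl, hrl, hsum, heq, hgcd⟩ := hA'
    have a1 : ∀ x ∈ t, A.dl x = 1 ∧ A.rl x = A.r 1 := by
      intro x hx
      have hx' : x ∈ (Finset.Icc 1 s).filter (fun j => A.dl j = 1) := by rw [hfil]; exact hx
      have hd := (Finset.mem_filter.1 hx').2
      have hxI := Finset.mem_Icc.1 (ht hx)
      have h2 := heq x hxI.1 hxI.2
      rw [hd, one_mul] at h2
      exact ⟨hd, h2⟩
    have a3 : ∀ x ∈ c, 2 ≤ A.dl x := by
      intro x hx
      obtain ⟨hxI, hxt⟩ := hcIcc x hx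
      have hxr := Finset.mem_Icc.1 hxI
      have h1 : A.dl x ≠ 1 := by
        intro h
        exact hxt (by rw [← hfil]; exact Finset.mem_filter.2 ⟨hxI, h⟩)
      have := hdl x hxr.1 hxr.2
      omega
    have a4 : A.d 1 * A.r 1 = ∑ x ∈ c, A.rl x + t.card * A.r 1 := by
      have hsplit : ∑ y ∈ c, A.rl y + ∑ y ∈ t, A.rl y = ∑ y ∈ Finset.Icc 1 s, A.rl y := by
        rw [hcdef]; exact Finset.sum_sdiff ht
      have hts : ∑ y ∈ t, A.rl y = t.card * A.r 1 := by
        calc ∑ y ∈ t, A.rl y = ∑ _y ∈ t, A.r 1 :=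
          Finset.sum_congr rfl (fun y hy => (a1 y hy).2)
        _ = t.card * A.r 1 := by rw [Finset.sum_const, smul_eq_mul]
      omega
    have a5 : t.card < A.d 1 := by
      have hpos : 0 < ∑ x ∈ c, A.rl x := by
        refine Finset.sum_pos ?_ (Finset.card_pos.1 (by omega))
        intro x hx
        have hxr := Finset.mem_Icc.1 (hcIcc x hx).1
        exact hrl x hxr.1 hxr.2
      have : t.card * A.r 1 < A.d 1 * A.r 1 := by omega
      exact Nat.lt_of_mul_lt_mul_right this
    refine ⟨a1, a3, a5, ?_⟩
    rw [Nat.sub_mul]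
    omega
  -- forward well-definedness
  have key_fwd : ∀ (A : CTStruct 1 s), A.IsArith →
      (Finset.Icc 1 s).filter (fun j => A.dl j = 1) = t →
      ((mkStar k (A.d 1 - t.card) (A.r 1) (fun m => A.dl (idx m)) (fun m => A.rl (idx m))).IsArith ∧
       (mkStar k (A.d 1 - t.card) (A.r 1) (fun m => A.dl (idx m)) (fun m => A.rl (idx m))).IsSmooth) := by
    intro A hA hfil
    obtain ⟨a1, a3, a5, a6⟩ := hAfacts A hA hfil
    have hA' := (isArith_star_iff A).1 hA
    obtain ⟨hd1, hr1, hdl, hrl, hsum, heq, hgcd⟩ := hA'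
    have hIccm : ∀ m, 1 ≤ m → m ≤ k → 1 ≤ idx m ∧ idx m ≤ s := by
      intro m h1 h2
      exact Finset.mem_Icc.1 (hcIcc _ (hidx_mem m h1 h2)).1
    constructor
    · rw [isArith_star_iff]
      refine ⟨?_, ?_, ?_, ?_, ?_, ?_, ?_⟩
      · rw [mkStar_d_one]; omega
      · rw [mkStar_r_one]; exact hr1
      · intro m h1 h2
        simp only [mkStar_dl, if_pos (And.intro h1 h2)]
        have := hIccm m h1 h2
        exact hdl _ this.1 this.2
      · intro m h1 h2
        simp only [mkStar_rl, if_pos (And.intro h1 h2)]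
        have := hIccm m h1 h2
        exact hrl _ this.1 this.2
      · rw [mkStar_d_one, mkStar_r_one, mkStar_rl_fun]
        have hmask : ∑ m ∈ Finset.Icc 1 k,
            (if 1 ≤ m ∧ m ≤ k then A.rl (idx m) else 0) = ∑ m ∈ Finset.Icc 1 k, A.rl (idx m) :=
          Finset.sum_congr rfl (fun m hm => if_pos (Finset.mem_Icc.1 hm))
        rw [hmask, hsum_c A.rl]
        exact a6
      · intro m h1 h2
        rw [mkStar_r_one]
        simp only [mkStar_dl, mkStar_rl, if_pos (And.intro h1 h2)]
        have := hIccm m h1 h2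
        exact heq _ this.1 this.2
      · rw [mkStar_r_one, mkStar_rl_fun]
        set w := Nat.gcd (A.r 1) ((Finset.Icc 1 k).gcd
          (fun m => if 1 ≤ m ∧ m ≤ k then A.rl (idx m) else 0)) with hw
        have hw1 : w ∣ A.r 1 := Nat.gcd_dvd_left _ _
        have hw2 : ∀ x ∈ Finset.Icc 1 s, w ∣ A.rl x := by
          intro x hx
          by_cases hxt : x ∈ t
          · rw [(a1 x hxt).2]; exact hw1
          · have hxc : x ∈ c := by rw [hcdef]; exact Finset.mem_sdiff.2 ⟨hx, hxt⟩
            have hm := heidx_mem x hxc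
            have : (if 1 ≤ eidx x ∧ eidx x ≤ k then A.rl (idx (eidx x)) else 0) = A.rl x := by
              rw [if_pos hm, hright x hxc]
            rw [← this]
            exact (Nat.gcd_dvd_right _ _).trans
              (Finset.gcd_dvd (Finset.mem_Icc.2 hm))
        have : w ∣ 1 := by
          rw [← hgcd]
          exact Nat.dvd_gcd hw1 (Finset.dvd_gcd hw2)
        exact Nat.eq_one_of_dvd_one this
    · constructor
      · intro i h1 h2; omega
      · intro m h1 h2
        simp only [mkStar_dl, if_pos (And.intro h1 h2)]
        exact a3 _ (hidx_mem m h1 h2)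
  -- backward well-definedness
  have key_bwd : ∀ (B : CTStruct 1 k), B.IsArith → B.IsSmooth →
      ((mkStar s (B.d 1 + t.card) (B.r 1)
          (fun x => if x ∈ t then 1 else B.dl (eidx x))
          (fun x => if x ∈ t then B.r 1 else B.rl (eidx x))).IsArith ∧
        (Finset.Icc 1 s).filter
          (fun j => (mkStar s (B.d 1 + t.card) (B.r 1)
            (fun x => if x ∈ t then 1 else B.dl (eidx x))
            (fun x => if x ∈ t then B.r 1 else B.rl (eidx x))).dl j = 1) = t) := by
    intro B hB hBs
    have hB' := (isArith_star_iff B).1 hB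
    obtain ⟨hd1, hr1, hdl, hrl, hsum, heq, hgcd⟩ := hB'
    have hBs2 := hBs.2
    constructor
    · rw [isArith_star_iff]
      refine ⟨?_, ?_, ?_, ?_, ?_, ?_, ?_⟩
      · rw [mkStar_d_one]; omega
      · rw [mkStar_r_one]; exact hr1
      · intro x h1 h2
        simp only [mkStar_dl, if_pos (And.intro h1 h2)]
        by_cases hxt : x ∈ t
        · rw [if_pos hxt]; omega
        · rw [if_neg hxt]
          have hxc : x ∈ c := by
            rw [hcdef]; exact Finset.mem_sdiff.2 ⟨Finset.mem_Icc.2 ⟨h1, h2⟩, hxt⟩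
          have hm := heidx_mem x hxc
          exact hdl _ hm.1 hm.2
      · intro x h1 h2
        simp only [mkStar_rl, if_pos (And.intro h1 h2)]
        by_cases hxt : x ∈ t
        · rw [if_pos hxt]; exact hr1
        · rw [if_neg hxt]
          have hxc : x ∈ c := by
            rw [hcdef]; exact Finset.mem_sdiff.2 ⟨Finset.mem_Icc.2 ⟨h1, h2⟩, hxt⟩
          have hm := heidx_mem x hxc
          exact hrl _ hm.1 hm.2
      · rw [mkStar_d_one, mkStar_r_one, mkStar_rl_fun]
        have hsplit : ∑ y ∈ c, (fun x => if 1 ≤ x ∧ x ≤ s then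
              (if x ∈ t then B.r 1 else B.rl (eidx x)) else 0) y
            + ∑ y ∈ t, (fun x => if 1 ≤ x ∧ x ≤ s then
              (if x ∈ t then B.r 1 else B.rl (eidx x)) else 0) y
            = ∑ y ∈ Finset.Icc 1 s, (fun x => if 1 ≤ x ∧ x ≤ s then
              (if x ∈ t then B.r 1 else B.rl (eidx x)) else 0) y := by
          rw [hcdef]; exact Finset.sum_sdiff ht
        rw [← hsplit]
        have h1 : ∑ y ∈ t, (fun x => if 1 ≤ x ∧ x ≤ s then
            (if x ∈ t then B.r 1 else B.rl (eidx x)) else 0) y = t.card * B.r 1 := by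
          calc ∑ y ∈ t, (fun x => if 1 ≤ x ∧ x ≤ s then
              (if x ∈ t then B.r 1 else B.rl (eidx x)) else 0) y
              = ∑ _y ∈ t, B.r 1 := by
                refine Finset.sum_congr rfl (fun y hy => ?_)
                beta_reduce
                rw [if_pos (Finset.mem_Icc.1 (ht hy)), if_pos hy]
          _ = t.card * B.r 1 := by rw [Finset.sum_const, smul_eq_mul]
        have h2 : ∑ y ∈ c, (fun x => if 1 ≤ x ∧ x ≤ s then
            (if x ∈ t then B.r 1 else B.rl (eidx x)) else 0) y
            = ∑ m ∈ Finset.Icc 1 k, B.rl m := by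
          rw [← hsum_c (fun x => if 1 ≤ x ∧ x ≤ s then
            (if x ∈ t then B.r 1 else B.rl (eidx x)) else 0)]
          refine Finset.sum_congr rfl (fun m hm => ?_)
          rw [Finset.mem_Icc] at hm
          have h3 := hcIcc _ (hidx_mem m hm.1 hm.2)
          beta_reduce
          rw [if_pos (Finset.mem_Icc.1 h3.1), if_neg h3.2, hleft m hm.1 hm.2]
        rw [h1, h2, ← hsum]
        ring
      · intro x h1 h2
        rw [mkStar_r_one]
        simp only [mkStar_dl, mkStar_rl, if_pos (And.intro h1 h2)]
        by_cases hxt : x ∈ t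
        · rw [if_pos hxt, if_pos hxt, one_mul]
        · rw [if_neg hxt, if_neg hxt]
          have hxc : x ∈ c := by
            rw [hcdef]; exact Finset.mem_sdiff.2 ⟨Finset.mem_Icc.2 ⟨h1, h2⟩, hxt⟩
          have hm := heidx_mem x hxc
          exact heq _ hm.1 hm.2
      · rw [mkStar_r_one, mkStar_rl_fun]
        set w := Nat.gcd (B.r 1) ((Finset.Icc 1 s).gcd
          (fun x => if 1 ≤ x ∧ x ≤ s then (if x ∈ t then B.r 1 else B.rl (eidx x)) else 0))
          with hw
        have hw1 : w ∣ B.r 1 := Nat.gcd_dvd_left _ _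
        have hw2 : ∀ m ∈ Finset.Icc 1 k, w ∣ B.rl m := by
          intro m hm
          rw [Finset.mem_Icc] at hm
          have hmc := hidx_mem m hm.1 hm.2
          have h3 := hcIcc _ hmc
          have : (if 1 ≤ idx m ∧ idx m ≤ s then
              (if idx m ∈ t then B.r 1 else B.rl (eidx (idx m))) else 0) = B.rl m := by
            rw [if_pos (Finset.mem_Icc.1 h3.1), if_neg h3.2, hleft m hm.1 hm.2]
          rw [← this]
          exact (Nat.gcd_dvd_right _ _).trans (Finset.gcd_dvd h3.1)
        have : w ∣ 1 := by
          rw [← hgcd]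
          exact Nat.dvd_gcd hw1 (Finset.dvd_gcd hw2)
        exact Nat.eq_one_of_dvd_one this
    · ext x
      rw [Finset.mem_filter]
      simp only [mkStar_dl]
      constructor
      · rintro ⟨hxI, hx1⟩
        rw [if_pos (Finset.mem_Icc.1 hxI)] at hx1
        by_cases hxt : x ∈ t
        · exact hxt
        · exfalso
          have hxc : x ∈ c := by rw [hcdef]; exact Finset.mem_sdiff.2 ⟨hxI, hxt⟩
          have hm := heidx_mem x hxc
          rw [if_neg hxt] at hx1
          have := hBs2 _ hm.1 hm.2
          omega
      · intro hxt
        refine ⟨ht hxt, ?_⟩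
        rw [if_pos (Finset.mem_Icc.1 (ht hxt)), if_pos hxt]
  -- the equivalence
  apply Nat.card_congr
  refine
    { toFun := fun A => ⟨mkStar k (A.1.d 1 - t.card) (A.1.r 1)
        (fun m => A.1.dl (idx m)) (fun m => A.1.rl (idx m)),
        key_fwd A.1 A.2.1 A.2.2⟩,
      invFun := fun B => ⟨mkStar s (B.1.d 1 + t.card) (B.1.r 1)
        (fun x => if x ∈ t then 1 else B.1.dl (eidx x))
        (fun x => if x ∈ t then B.1.r 1 else B.1.rl (eidx x)),
        key_bwd B.1 B.2.1 B.2.2⟩,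
      left_inv := ?_, right_inv := ?_ }
  · rintro ⟨A, hA, hfil⟩
    obtain ⟨a1, a3, a5, a6⟩ := hAfacts A hA hfil
    apply Subtype.ext
    simp only
    apply CTStruct.ext' <;> funext x <;>
      simp only [mkStar_d, mkStar_r, mkStar_dl, mkStar_rl, eq_self_iff_true, if_true]
    · by_cases hx : x = 1
      · subst hx
        norm_num
        omega
      · rw [if_neg hx, (A.d_norm x (by omega))]
    · by_cases hx : x = 1
      · subst hx; norm_num
      · rw [if_neg hx, (A.r_norm x (by omega))]
    · by_cases hx : 1 ≤ x ∧ x ≤ s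
      · rw [if_pos hx]
        by_cases hxt : x ∈ t
        · rw [if_pos hxt, (a1 x hxt).1]
        · have hxc : x ∈ c := by
            rw [hcdef]; exact Finset.mem_sdiff.2 ⟨Finset.mem_Icc.2 hx, hxt⟩
          have hm := heidx_mem x hxc
          rw [if_neg hxt, if_pos hm, hright x hxc]
      · rw [if_neg hx, (A.dl_norm x hx)]
    · by_cases hx : 1 ≤ x ∧ x ≤ s
      · rw [if_pos hx]
        by_cases hxt : x ∈ t
        · rw [if_pos hxt, (a1 x hxt).2]
        · have hxc : x ∈ c := by
            rw [hcdef]; exact Finset.mem_sdiff.2 ⟨Finset.mem_Icc.2 hx, hxt⟩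
          have hm := heidx_mem x hxc
          rw [if_neg hxt, if_pos hm, hright x hxc]
      · rw [if_neg hx, (A.rl_norm x hx)]
  · rintro ⟨B, hB, hBs⟩
    apply Subtype.ext
    simp only
    apply CTStruct.ext' <;> funext x <;>
      simp only [mkStar_d, mkStar_r, mkStar_dl, mkStar_rl, eq_self_iff_true, if_true]
    · by_cases hx : x = 1
      · subst hx
        norm_num
      · rw [if_neg hx, (B.d_norm x (by omega))]
    · by_cases hx : x = 1
      · subst hx; norm_num
      · rw [if_neg hx, (B.r_norm x (by omega))]
    · by_cases hx : 1 ≤ x ∧ x ≤ k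
      · rw [if_pos hx]
        have hxc := hidx_mem x hx.1 hx.2
        have h3 := hcIcc _ hxc
        rw [if_pos (Finset.mem_Icc.1 h3.1), if_neg h3.2, hleft x hx.1 hx.2]
      · rw [if_neg hx, (B.dl_norm x hx)]
    · by_cases hx : 1 ≤ x ∧ x ≤ k
      · rw [if_pos hx]
        have hxc := hidx_mem x hx.1 hx.2
        have h3 := hcIcc _ hxc
        rw [if_pos (Finset.mem_Icc.1 h3.1), if_neg h3.2, hleft x hx.1 hx.2]
      · rw [if_neg hx, (B.rl_norm x hx)]

end Fiber

/-- star graphs.  For `s ≥ 2`, the number of arithmetical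
structures on the star graph `CT(1,s)` is
`1 + Σ_{j=0}^{s-2} choose s j * |SArith(CT(1, s-j))|`. -/
theorem ct_count_arith_star (s : ℕ) (hs : 2 ≤ s) :
    Nat.card {A : CTStruct 1 s // A.IsArith} =
      1 + ∑ j ∈ Finset.range (s - 1), Nat.choose s j * sArithCard 1 (s - j) := by
  classical
  haveI : Finite {A : CTStruct 1 s // A.IsArith} := star_arith_finite s
  haveI : Fintype {A : CTStruct 1 s // A.IsArith} := Fintype.ofFinite _
  rw [Nat.card_eq_fintype_card]
  set T : {A : CTStruct 1 s // A.IsArith} → Finset ℕ :=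
    fun A => (Finset.Icc 1 s).filter (fun j => A.1.dl j = 1) with hT
  have hmem : ∀ A ∈ (Finset.univ : Finset {A : CTStruct 1 s // A.IsArith}),
      T A ∈ (Finset.Icc 1 s).powerset :=
    fun A _ => Finset.mem_powerset.2 (Finset.filter_subset _ _)
  have hcards : (Finset.Icc 1 s).card = s := by rw [Nat.card_Icc]; omega
  rw [← Finset.card_univ, Finset.card_eq_sum_card_fiberwise hmem, Finset.sum_powerset, hcards]
  -- the three kinds of fibers
  have hfib_gen : ∀ j, j + 2 ≤ s → ∀ u ∈ Finset.powersetCard j (Finset.Icc 1 s),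
      (Finset.univ.filter (fun A => T A = u)).card = sArithCard 1 (s - j) := by
    intro j hj u hu
    rw [Finset.mem_powersetCard] at hu
    obtain ⟨husub, hucard⟩ := hu
    rw [← Fintype.card_subtype, ← Nat.card_eq_fintype_card]
    have hequiv : {A : {A : CTStruct 1 s // A.IsArith} // T A = u} ≃
        {A : CTStruct 1 s // A.IsArith ∧ (Finset.Icc 1 s).filter (fun j => A.dl j = 1) = u} :=
      Equiv.subtypeSubtypeEquivSubtypeInter (fun A : CTStruct 1 s => A.IsArith)
        (fun A => (Finset.Icc 1 s).filter (fun j => A.dl j = 1) = u)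
    rw [Nat.card_congr hequiv, fiber_card u husub (by omega), hucard]
  have hfib_one : ∀ u ∈ Finset.powersetCard (s - 1) (Finset.Icc 1 s),
      (Finset.univ.filter (fun A => T A = u)).card = 0 := by
    intro u hu
    rw [Finset.mem_powersetCard] at hu
    obtain ⟨husub, hucard⟩ := hu
    rw [Finset.card_eq_zero, Finset.filter_eq_empty_iff]
    intro A _
    exact fiber_empty u husub (by omega) A.1 A.2
  have hfib_full :
      (Finset.univ.filter (fun A => T A = Finset.Icc 1 s)).card = 1 := by
    rw [Finset.card_eq_one]
    have h0 := (starOne_spec (by omega : 1 ≤ s) (starOne s)).2 rfl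
    refine ⟨⟨starOne s, h0.1⟩, ?_⟩
    ext B
    simp only [Finset.mem_filter, Finset.mem_univ, true_and, Finset.mem_singleton]
    constructor
    · intro hB
      exact Subtype.ext ((starOne_spec (by omega : 1 ≤ s) B.1).1 ⟨B.2, hB⟩)
    · intro hB
      rw [hB]
      exact h0.2
  obtain ⟨m, rfl⟩ : ∃ m, s = m + 2 := ⟨s - 2, by omega⟩
  rw [show m + 2 + 1 = (m + 1) + 1 + 1 by ring, Finset.sum_range_succ, Finset.sum_range_succ]
  have h1 : ∑ u ∈ Finset.powersetCard (m + 1 + 1) (Finset.Icc 1 (m + 2)),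
      (Finset.univ.filter (fun A => T A = u)).card = 1 := by
    have : Finset.powersetCard (m + 1 + 1) (Finset.Icc 1 (m + 2)) = {Finset.Icc 1 (m + 2)} := by
      have h4 := Finset.powersetCard_self (Finset.Icc 1 (m + 2))
      rwa [hcards] at h4
    rw [this, Finset.sum_singleton, hfib_full]
  have h2 : ∑ u ∈ Finset.powersetCard (m + 1) (Finset.Icc 1 (m + 2)),
      (Finset.univ.filter (fun A => T A = u)).card = 0 := by
    refine Finset.sum_eq_zero ?_
    intro u hu
    exact hfib_one u (by simpa using hu)
  rw [h1, h2]
  have h3 : ∀ j ∈ Finset.range (m + 1),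
      ∑ u ∈ Finset.powersetCard j (Finset.Icc 1 (m + 2)),
        (Finset.univ.filter (fun A => T A = u)).card
      = Nat.choose (m + 2) j * sArithCard 1 (m + 2 - j) := by
    intro j hj
    rw [Finset.mem_range] at hj
    calc ∑ u ∈ Finset.powersetCard j (Finset.Icc 1 (m + 2)),
        (Finset.univ.filter (fun A => T A = u)).card
        = ∑ _u ∈ Finset.powersetCard j (Finset.Icc 1 (m + 2)), sArithCard 1 (m + 2 - j) :=
          Finset.sum_congr rfl (hfib_gen j (by omega))
      _ = Nat.choose (m + 2) j * sArithCard 1 (m + 2 - j) := by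
          rw [Finset.sum_const, Finset.card_powersetCard, hcards, smul_eq_mul]
  rw [Finset.sum_congr rfl h3]
  have : m + 2 - 1 = m + 1 := by omega
  rw [this]
  omega
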